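/- Over one full cycle of Osborne's algorithm updating coordinates j = 1, ..., n in order, the potential decreases by the sum of the per-coordinate imbalances at update time: φ(u_{k+1}) - φ(u_k) = -Σ_{j=1}^n (√(r_j(u_{k,j})) - √(c_j(u_{k,j})))², where u_{k,j} is the iterate right before coordinate j is updated in cycle k. -/

import Mathlib

open Real Finset

noncomputable def rowSum {n : ℕ} (A : Matrix (Fin n) (Fin n) ℝ) (u : Fin n → ℝ) (j : Fin n) : ℝ :=
  ∑ i, Real.exp (u j - u i) * A j i

noncomputable def colSum {n : ℕ} (A : Matrix (Fin n) (Fin n) ℝ) (u : Fin n → ℝ) (j : Fin n) : ℝ :=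
  ∑ i, Real.exp (u i - u j) * A i j

noncomputable def potential {n : ℕ} (A : Matrix (Fin n) (Fin n) ℝ) (u : Fin n → ℝ) : ℝ :=
  ∑ i, ∑ j, Real.exp (u i - u j) * A i j

/-- One Osborne update: balance the j-th row/column pair. -/
noncomputable def osborneUpdate {n : ℕ} (A : Matrix (Fin n) (Fin n) ℝ)
    (u : Fin n → ℝ) (j : Fin n) : Fin n → ℝ :=
  Function.update u j
    (u j + (1 / 2) * (Real.log (colSum A u j) - Real.log (rowSum A u j)))

lemma osborne_step {n : ℕ} (A : Matrix (Fin n) (Fin n) ℝ)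
    (hdiag : ∀ i, A i i = 0) (u : Fin n → ℝ) (j : Fin n)
    (hr : 0 < rowSum A u j) (hc : 0 < colSum A u j) :
    potential A (osborneUpdate A u j) - potential A u
      = -(Real.sqrt (rowSum A u j) - Real.sqrt (colSum A u j)) ^ 2 := by
  set r := rowSum A u j with hrdef
  set c := colSum A u j with hcdef
  set t : ℝ := (1 / 2) * (Real.log c - Real.log r) with htdef
  set u' := osborneUpdate A u j with hu'def
  have hu' : ∀ i, u' i = u i + (if i = j then t else 0) := by
    intro i
    by_cases hi : i = j
    · subst hi; simp [hu'def, osborneUpdate, htdef]; rfl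
    · simp [hu'def, osborneUpdate, Function.update, hi]
  set D : Fin n → Fin n → ℝ := fun i m => Real.exp (u i - u m) * A i m with hD
  have hDjj : D j j = 0 := by simp [hD, hdiag]
  have expand : potential A u' - potential A u
      = ∑ i, ∑ m, (Real.exp ((if i = j then t else 0) - (if m = j then t else 0)) - 1) * D i m := by
    unfold potential
    rw [← Finset.sum_sub_distrib]
    refine Finset.sum_congr rfl fun i _ => ?_
    rw [← Finset.sum_sub_distrib]
    refine Finset.sum_congr rfl fun m _ => ?_
    rw [hu' i, hu' m]
    have : u i + (if i = j then t else 0) - (u m + (if m = j then t else 0))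
        = ((if i = j then t else 0) - (if m = j then t else 0)) + (u i - u m) := by ring
    rw [this, Real.exp_add, hD]
    ring
  have hsplit : ∀ i m, (Real.exp ((if i = j then t else 0) - (if m = j then t else 0)) - 1) * D i m
      = (if i = j then (Real.exp t - 1) * D j m else 0)
        + (if m = j then (Real.exp (-t) - 1) * D i j else 0) := by
    intro i m
    by_cases hi : i = j <;> by_cases hm : m = j <;>
      simp [hi, hm, hDjj]
  have hE : potential A u' - potential A u = (Real.exp t - 1) * r + (Real.exp (-t) - 1) * c := by
    rw [expand]
    simp only [hsplit, Finset.sum_add_distrib]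
    have h1 : ∑ i, ∑ m, (if i = j then (Real.exp t - 1) * D j m else 0) = (Real.exp t - 1) * r := by
      rw [Finset.sum_eq_single j]
      · simp only [eq_self_iff_true, if_true]
        rw [← Finset.mul_sum]
        rfl
      · intro i _ hi
        simp [hi]
      · simp
    have h2 : ∑ i, ∑ m, (if m = j then (Real.exp (-t) - 1) * D i j else 0)
        = (Real.exp (-t) - 1) * c := by
      have : ∀ i : Fin n, ∑ m, (if m = j then (Real.exp (-t) - 1) * D i j else 0)
          = (Real.exp (-t) - 1) * D i j := by
        intro i; simp
      simp only [this]
      rw [← Finset.mul_sum]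
      rfl
    rw [h1, h2]
  have hsr : (0:ℝ) < Real.sqrt r := Real.sqrt_pos.2 hr
  have hsc : (0:ℝ) < Real.sqrt c := Real.sqrt_pos.2 hc
  set a := Real.sqrt r with hadef
  set b := Real.sqrt c with hbdef
  have het : Real.exp t = Real.sqrt c / Real.sqrt r := by
    rw [htdef, show (1/2:ℝ) * (Real.log c - Real.log r) = Real.log c / 2 - Real.log r / 2 by ring,
      ← Real.log_sqrt hc.le, ← Real.log_sqrt hr.le, Real.exp_sub, Real.exp_log hsc,
      Real.exp_log hsr]
  have hent : Real.exp (-t) = a / b := by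
    rw [Real.exp_neg, het, inv_div]
  have hr2 : r = a * a := (Real.mul_self_sqrt hr.le).symm
  have hc2 : c = b * b := (Real.mul_self_sqrt hc.le).symm
  rw [hE, het, hent, hr2, hc2]
  simp only [Real.sqrt_mul_self hsr.le, Real.sqrt_mul_self hsc.le]
  field_simp
  ring

/-- Descent Lemma: over a full cycle of Osborne's algorithm, the potential decreases by
the sum over j of (sqrt r_j - sqrt c_j)^2 evaluated right before coordinate j is updated. -/
theorem osborne_cycle_descent (n : ℕ) (A : Matrix (Fin n) (Fin n) ℝ)
    (hA : ∀ i j, 0 ≤ A i j) (hdiag : ∀ i, A i i = 0)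
    (v : ℕ → Fin n → ℝ)
    (hv : ∀ j : Fin n, v (j.val + 1) = osborneUpdate A (v j.val) j)
    (hpos : ∀ j : Fin n, 0 < rowSum A (v j.val) j ∧ 0 < colSum A (v j.val) j) :
    potential A (v n) - potential A (v 0)
      = -∑ j : Fin n,
          (Real.sqrt (rowSum A (v j.val) j) - Real.sqrt (colSum A (v j.val) j)) ^ 2 := by
  have htel : potential A (v n) - potential A (v 0)
      = ∑ k ∈ Finset.range n, (potential A (v (k + 1)) - potential A (v k)) :=
    (Finset.sum_range_sub (fun k => potential A (v k)) n).symm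
  rw [htel, ← Fin.sum_univ_eq_sum_range (fun k => potential A (v (k + 1)) - potential A (v k)) n,
    ← Finset.sum_neg_distrib]
  refine Finset.sum_congr rfl fun j _ => ?_
  rw [hv j]
  exact osborne_step A hdiag (v j.val) j (hpos j).1 (hpos j).2
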